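/- Let φ : ℝ → ℝ be continuous, with φ(x) → 1 as x → +∞, and suppose x_0 ∈ ℝ with |φ(x_0) − t| < ε/2 for a target t. Fix a vertex n_i ∈ {0,1}^K. Then there exist w ∈ ℝ^K and b ∈ ℝ such that φ(b + w^T n_i) = φ(x_0) and |φ(b + w^T n_j) − 1| < ε for all vertices n_j ≠ n_i. -/
import Mathlib


theorem nps_selector_neuron
    (K : ℕ) (hK : 0 < K)
    (φ : ℝ → ℝ) (hφc : Continuous φ)
    (h1 : Filter.Tendsto φ Filter.atTop (nhds 1))
    (x₀ t ε : ℝ) (hε : 0 < ε)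
    (hx₀ : |φ x₀ - t| < ε / 2)
    (ni : Fin K → ℝ) (hni : ∀ k, ni k = 0 ∨ ni k = 1) :
    ∃ (w : Fin K → ℝ) (b : ℝ),
      φ (b + ∑ k, w k * ni k) = φ x₀ ∧
      ∀ nj : Fin K → ℝ, (∀ k, nj k = 0 ∨ nj k = 1) → nj ≠ ni →
        |φ (b + ∑ k, w k * nj k) - 1| < ε := by
  obtain ⟨M, hM⟩ := Metric.tendsto_atTop.mp h1 ε hε
  set u : Fin K → ℝ := fun k => 1 - 2 * ni k with hu
  set θ : ℝ := max (M - x₀) 0 with hθ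
  have hθ0 : 0 ≤ θ := le_max_right _ _
  have hθM : M - x₀ ≤ θ := le_max_left _ _
  have e1 : ∀ v : Fin K → ℝ, ∑ k, θ * u k * v k = θ * ∑ k, u k * v k := by
    intro v; rw [Finset.mul_sum]; simp [mul_assoc]
  refine ⟨fun k => θ * u k, x₀ - θ * ∑ k, u k * ni k, ?_, ?_⟩
  · congr 1; rw [e1]; ring
  · intro nj hnj hne
    have hS : (1 : ℝ) ≤ ∑ k, u k * (nj k - ni k) := by
      obtain ⟨k₀, hk₀⟩ : ∃ k, nj k ≠ ni k := by
        by_contra h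
        push_neg at h
        exact hne (funext h)
      have hterm : ∀ k, k ∈ Finset.univ → 0 ≤ u k * (nj k - ni k) := by
        intro k _
        rcases hni k with h | h <;> rcases hnj k with h' | h' <;>
          simp [hu, h, h'] <;> norm_num
      have h1le : (1 : ℝ) ≤ u k₀ * (nj k₀ - ni k₀) := by
        rcases hni k₀ with h | h <;> rcases hnj k₀ with h' | h' <;>
          simp [hu, h, h'] at hk₀ ⊢ <;> norm_num
      calc (1 : ℝ) ≤ u k₀ * (nj k₀ - ni k₀) := h1le
        _ ≤ ∑ k, u k * (nj k - ni k) :=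
          Finset.single_le_sum hterm (Finset.mem_univ k₀)
    have hx : (x₀ - θ * ∑ k, u k * ni k) + ∑ k, θ * u k * nj k
        = x₀ + θ * ∑ k, u k * (nj k - ni k) := by
      rw [e1]
      simp only [mul_sub, Finset.sum_sub_distrib]
      ring
    rw [hx]
    have hge : M ≤ x₀ + θ * ∑ k, u k * (nj k - ni k) := by
      have : θ * 1 ≤ θ * ∑ k, u k * (nj k - ni k) :=
        mul_le_mul_of_nonneg_left hS hθ0
      nlinarith
    have := hM _ hge
    rwa [Real.dist_eq] at this
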